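/- Assume nonnegative quantities satisfy, for every $\varepsilon, \delta, \alpha \in (0,1)$ and fixed $\beta > 0$ chosen with $\beta C_{red} \le 1$: (a) $(1-\alpha) e_{\ell+1}^2 + \alpha^{-1} C_o\, o_{\ell+1}^2 + \beta r_{\ell+1}^2 \le e_\ell^2 + \alpha^{-1} C_o\, o_\ell^2 + \beta q\, r_\ell^2 + (\beta C_{red} - 1) d^2$, (b) reliability $e_\ell \le C_{rel}\, r_\ell$, and (c) $o_\ell \le r_\ell$, where $0 < q < 1$. Then there exist $\gamma, \lambda > 0$ and $0 < \kappa < 1$, depending only on $q, \beta, C_{rel}, C_o, C_{red}$, such that $\Delta_\ell := e_\ell^2 + \lambda o_\ell^2 + \gamma r_\ell^2$ satisfies $\Delta_{\ell+1} \le \kappa \Delta_\ell$. -/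

import Mathlib

set_option maxHeartbeats 1000000


/-- Abstract contraction theorem for the quasi-error: from the combined estimate (a),
reliability (b), and the oscillation bound (c), one obtains constants `γ, λ > 0` and
`κ ∈ (0,1)` such that `Δ_ℓ := e_ℓ² + λ o_ℓ² + γ r_ℓ²` contracts. -/
theorem quasi_error_contraction
    (e o r d : ℕ → ℝ) (β q Crel Co Cred : ℝ)
    (he : ∀ ℓ, 0 ≤ e ℓ) (ho : ∀ ℓ, 0 ≤ o ℓ) (hr : ∀ ℓ, 0 ≤ r ℓ) (hd : ∀ ℓ, 0 ≤ d ℓ)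
    (hβ : 0 < β) (hq0 : 0 < q) (hq1 : q < 1)
    (hCrel : 0 < Crel) (hCo : 0 < Co) (hCred : 0 < Cred)
    (hβCred : β * Cred ≤ 1)
    (ha : ∀ ℓ, ∀ α : ℝ, 0 < α → α < 1 →
      (1 - α) * (e (ℓ + 1)) ^ 2 + α⁻¹ * Co * (o (ℓ + 1)) ^ 2 + β * (r (ℓ + 1)) ^ 2
        ≤ (e ℓ) ^ 2 + α⁻¹ * Co * (o ℓ) ^ 2 + β * q * (r ℓ) ^ 2
          + (β * Cred - 1) * (d ℓ) ^ 2)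
    (hb : ∀ ℓ, e ℓ ≤ Crel * r ℓ)
    (hc : ∀ ℓ, o ℓ ≤ r ℓ) :
    ∃ γ > (0:ℝ), ∃ lam > (0:ℝ), ∃ κ : ℝ, 0 < κ ∧ κ < 1 ∧
      ∀ ℓ, (e (ℓ + 1)) ^ 2 + lam * (o (ℓ + 1)) ^ 2 + γ * (r (ℓ + 1)) ^ 2
        ≤ κ * ((e ℓ) ^ 2 + lam * (o ℓ) ^ 2 + γ * (r ℓ) ^ 2) := by
  -- choose the absorption parameters
  set μ : ℝ := (1 - q) * β / (2 * Crel ^ 2) with hμdef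
  have hμ : 0 < μ := by
    apply div_pos (mul_pos (by linarith) hβ); positivity
  set α : ℝ := min μ 1 / 2 with hαdef
  have hmin : 0 < min μ 1 := lt_min hμ one_pos
  have hα0 : 0 < α := by positivity
  have hα1 : α < 1 := by
    have : min μ 1 ≤ 1 := min_le_right _ _
    rw [hαdef]; linarith
  have hαμ : α < μ := by
    have : min μ 1 ≤ μ := min_le_left _ _
    rw [hαdef]; linarith
  have h1α : 0 < 1 - α := by linarith
  set ν : ℝ := (1 - q) * β * α / (4 * Co) with hνdef
  have hν : 0 < ν := by
    apply div_pos (mul_pos (mul_pos (by linarith) hβ) hα0); positivity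
  refine ⟨β / (1 - α), by positivity, α⁻¹ * Co / (1 - α), by positivity,
    max (max ((1 - μ) / (1 - α)) (1 - ν)) ((3 + q) / 4), ?_, ?_, ?_⟩
  · exact lt_of_lt_of_le (by linarith) (le_max_right _ _)
  · refine max_lt (max_lt ?_ (by linarith)) (by linarith)
    rw [div_lt_one h1α]; linarith
  · intro ℓ
    set κ : ℝ := max (max ((1 - μ) / (1 - α)) (1 - ν)) ((3 + q) / 4) with hκdef
    have hκe : 1 - μ ≤ κ * (1 - α) := by
      have h := le_trans (le_max_left _ _) (le_max_left ((max ((1 - μ) / (1 - α)) (1 - ν))) ((3 + q) / 4))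
      have := (div_le_iff₀ h1α).mp h
      linarith
    have hκo : 1 - ν ≤ κ := le_trans (le_max_right _ _) (le_max_left _ _)
    have hκr : (3 + q) / 4 ≤ κ := le_max_right _ _
    have hA := ha ℓ α hα0 hα1
    have hdrop : (β * Cred - 1) * (d ℓ) ^ 2 ≤ 0 :=
      mul_nonpos_of_nonpos_of_nonneg (by linarith) (by positivity)
    have hE2 : (e ℓ) ^ 2 ≤ Crel ^ 2 * (r ℓ) ^ 2 := by
      nlinarith [hb ℓ, he ℓ, hr ℓ, hCrel]
    have hO2 : (o ℓ) ^ 2 ≤ (r ℓ) ^ 2 := by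
      nlinarith [hc ℓ, ho ℓ, hr ℓ]
    have hαinv : 0 < α⁻¹ := inv_pos.mpr hα0
    have hαα : α * α⁻¹ = 1 := mul_inv_cancel₀ hα0.ne'
    -- key coefficient identities
    have hid1 : μ * Crel ^ 2 = (1 - q) * β / 2 := by
      rw [hμdef]; field_simp
    have hid2 : ν * α⁻¹ * Co = (1 - q) * β / 4 := by
      rw [hνdef]; field_simp
    clear hμdef hνdef hαdef hκdef hmin hA
    have hA := ha ℓ α hα0 hα1
    clear_value μ ν α κ
    have hmain :
        (1 - α) * ((e (ℓ+1)) ^ 2 + (α⁻¹ * Co / (1 - α)) * (o (ℓ+1)) ^ 2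
            + (β / (1 - α)) * (r (ℓ+1)) ^ 2)
          ≤ (1 - α) * (κ * ((e ℓ) ^ 2 + (α⁻¹ * Co / (1 - α)) * (o ℓ) ^ 2
            + (β / (1 - α)) * (r ℓ) ^ 2)) := by
      have heq1 : (1 - α) * ((e (ℓ+1)) ^ 2 + (α⁻¹ * Co / (1 - α)) * (o (ℓ+1)) ^ 2
            + (β / (1 - α)) * (r (ℓ+1)) ^ 2)
          = (1 - α) * (e (ℓ+1)) ^ 2 + α⁻¹ * Co * (o (ℓ+1)) ^ 2 + β * (r (ℓ+1)) ^ 2 := by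
        field_simp
      have heq2 : (1 - α) * (κ * ((e ℓ) ^ 2 + (α⁻¹ * Co / (1 - α)) * (o ℓ) ^ 2
            + (β / (1 - α)) * (r ℓ) ^ 2))
          = κ * (1 - α) * (e ℓ) ^ 2 + κ * (α⁻¹ * Co) * (o ℓ) ^ 2 + κ * β * (r ℓ) ^ 2 := by
        field_simp
      rw [heq1, heq2]
      -- intermediate bound
      have step1 : (1 - α) * (e (ℓ+1)) ^ 2 + α⁻¹ * Co * (o (ℓ+1)) ^ 2 + β * (r (ℓ+1)) ^ 2
          ≤ (1 - μ) * (e ℓ) ^ 2 + α⁻¹ * Co * (1 - ν) * (o ℓ) ^ 2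
            + (β * q + μ * Crel ^ 2 + ν * α⁻¹ * Co) * (r ℓ) ^ 2 := by
        have habs1 : μ * (e ℓ) ^ 2 ≤ μ * (Crel ^ 2 * (r ℓ) ^ 2) :=
          mul_le_mul_of_nonneg_left hE2 hμ.le
        have habs2 : α⁻¹ * Co * ν * (o ℓ) ^ 2 ≤ α⁻¹ * Co * ν * (r ℓ) ^ 2 :=
          mul_le_mul_of_nonneg_left hO2 (by positivity)
        nlinarith [hA, hdrop]
      refine le_trans step1 ?_
      have hc1 : (1 - μ) * (e ℓ) ^ 2 ≤ κ * (1 - α) * (e ℓ) ^ 2 :=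
        mul_le_mul_of_nonneg_right hκe (by positivity)
      have hc2 : α⁻¹ * Co * (1 - ν) * (o ℓ) ^ 2 ≤ κ * (α⁻¹ * Co) * (o ℓ) ^ 2 := by
        have : α⁻¹ * Co * (1 - ν) ≤ κ * (α⁻¹ * Co) := by
          nlinarith [mul_pos hαinv hCo]
        exact mul_le_mul_of_nonneg_right this (by positivity)
      have hc3 : (β * q + μ * Crel ^ 2 + ν * α⁻¹ * Co) * (r ℓ) ^ 2
          ≤ κ * β * (r ℓ) ^ 2 := by
        have : β * q + μ * Crel ^ 2 + ν * α⁻¹ * Co ≤ κ * β := by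
          rw [hid1, hid2]
          nlinarith [hκr, hβ]
        exact mul_le_mul_of_nonneg_right this (by positivity)
      linarith
    exact le_of_mul_le_mul_left hmain h1α
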